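/- In a category with binary products, if m : Y₁ ⨯ Y₂ ⟶ Z₁ ⨯ Z₂ is a product morphism m = m₁₁ ⨯ m₂₂ and m has a retraction (is a split monomorphism), then m admits a retraction that is itself a product morphism, i.e., there exist h₁₁ : Z₁ ⟶ Y₁ and h₂₂ : Z₂ ⟶ Y₂ with (h₁₁ ⨯ h₂₂) ∘ m = id. -/

import Mathlib

open CategoryTheory CategoryTheory.Limits

theorem stmt_4 {C : Type*} [Category C] [HasBinaryProducts C] [HasTerminal C]
    {Y₁ Y₂ Z₁ Z₂ : C} (m₁₁ : Y₁ ⟶ Z₁) (m₂₂ : Y₂ ⟶ Z₂)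
    (h : Z₁ ⨯ Z₂ ⟶ Y₁ ⨯ Y₂) (hh : prod.map m₁₁ m₂₂ ≫ h = 𝟙 (Y₁ ⨯ Y₂))
    (z₁ : ⊤_ C ⟶ Z₁) (z₂ : ⊤_ C ⟶ Z₂) :
    ∃ (h₁₁ : Z₁ ⟶ Y₁) (h₂₂ : Z₂ ⟶ Y₂),
      prod.map m₁₁ m₂₂ ≫ prod.map h₁₁ h₂₂ = 𝟙 (Y₁ ⨯ Y₂) := by
  set y₁ : ⊤_ C ⟶ Y₁ := prod.lift z₁ z₂ ≫ h ≫ prod.fst with hy₁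
  set y₂ : ⊤_ C ⟶ Y₂ := prod.lift z₁ z₂ ≫ h ≫ prod.snd with hy₂
  refine ⟨prod.lift (𝟙 Z₁) (terminal.from Z₁ ≫ y₂ ≫ m₂₂) ≫ h ≫ prod.fst,
          prod.lift (terminal.from Z₂ ≫ y₁ ≫ m₁₁) (𝟙 Z₂) ≫ h ≫ prod.snd, ?_⟩
  have h1 : m₁₁ ≫ prod.lift (𝟙 Z₁) (terminal.from Z₁ ≫ y₂ ≫ m₂₂) ≫ h ≫ prod.fst
      = 𝟙 Y₁ := by
    have : m₁₁ ≫ prod.lift (𝟙 Z₁) (terminal.from Z₁ ≫ y₂ ≫ m₂₂)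
        = prod.lift (𝟙 Y₁) (terminal.from Y₁ ≫ y₂) ≫ prod.map m₁₁ m₂₂ := by
      have e : m₁₁ ≫ terminal.from Z₁ = terminal.from Y₁ := Subsingleton.elim _ _
      ext <;> simp [reassoc_of% e]
    rw [reassoc_of% this, reassoc_of% hh]
    exact prod.lift_fst _ _
  have h2 : m₂₂ ≫ prod.lift (terminal.from Z₂ ≫ y₁ ≫ m₁₁) (𝟙 Z₂) ≫ h ≫ prod.snd
      = 𝟙 Y₂ := by
    have : m₂₂ ≫ prod.lift (terminal.from Z₂ ≫ y₁ ≫ m₁₁) (𝟙 Z₂)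
        = prod.lift (terminal.from Y₂ ≫ y₁) (𝟙 Y₂) ≫ prod.map m₁₁ m₂₂ := by
      have e : m₂₂ ≫ terminal.from Z₂ = terminal.from Y₂ := Subsingleton.elim _ _
      ext <;> simp [reassoc_of% e]
    rw [reassoc_of% this, reassoc_of% hh]
    exact prod.lift_snd _ _
  rw [prod.map_map, h1, h2, prod.map_id_id]
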